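/- Let 0 < σ̲ ≤ σ̄ and define ρ(t,x) = (√2/((σ̄+σ̲)√(πt)))·[exp(−x²/(2σ̄²t)) for x ≤ 0, exp(−x²/(2σ̲²t)) for x > 0], and u(t,x) = ∫_{−∞}^x ρ(t,y) dy for t > 0. Then for all t > 0 and x ≠ 0, u satisfies the nonlinear heat equation ∂_t u(t,x) = G(∂²_{xx} u(t,x)), where G(a) = ½(σ̄² a⁺ − σ̲² a⁻). -/

import Mathlib

open Real MeasureTheory Set Filter

noncomputable def Fc (w : ℝ) : ℝ := ∫ z in Set.Iic w, Real.exp (-z ^ 2 / 2)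

lemma int_exp_aux {c : ℝ} (hc : 0 < c) : Integrable (fun y : ℝ => Real.exp (-y ^ 2 / c)) := by
  have h := integrable_exp_neg_mul_sq (show (0:ℝ) < c⁻¹ by positivity)
  exact h.congr (Filter.Eventually.of_forall fun y => by
    simp only
    rw [show -c⁻¹ * y ^ 2 = -y ^ 2 / c by ring])

lemma hFc (w : ℝ) : HasDerivAt Fc (Real.exp (-w ^ 2 / 2)) w := by
  have hint : Integrable (fun z : ℝ => Real.exp (-z ^ 2 / 2)) := int_exp_aux two_pos
  have heq : ∀ z : ℝ, Fc z = Fc 0 + ∫ u in (0:ℝ)..z, Real.exp (-u ^ 2 / 2) := by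
    intro z
    rw [← intervalIntegral.integral_Iic_sub_Iic hint.integrableOn hint.integrableOn]
    simp only [Fc]
    ring
  have hcont : Continuous fun z : ℝ => Real.exp (-z ^ 2 / 2) := by continuity
  have hd : HasDerivAt (fun z => Fc 0 + ∫ u in (0:ℝ)..z, Real.exp (-u ^ 2 / 2))
      (Real.exp (-w ^ 2 / 2)) w :=
    (intervalIntegral.integral_hasDerivAt_right hint.intervalIntegrable
      hint.aestronglyMeasurable.stronglyMeasurableAtFilter hcont.continuousAt).const_add _
  rw [show Fc = fun z => Fc 0 + ∫ u in (0:ℝ)..z, Real.exp (-u ^ 2 / 2) from funext heq]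
  exact hd

lemma scale_Iic (f : ℝ → ℝ) {a : ℝ} (ha : 0 < a) (x : ℝ) :
    ∫ y in Set.Iic x, f (y / a) = a * ∫ z in Set.Iic (x / a), f z := by
  rw [← integral_indicator measurableSet_Iic, ← integral_indicator measurableSet_Iic]
  have h := MeasureTheory.Measure.integral_comp_mul_left
    ((Set.Iic x).indicator fun y => f (y / a)) a
  have h2 : (fun z => (Set.Iic x).indicator (fun y => f (y / a)) (a * z))
      = (Set.Iic (x / a)).indicator f := by
    funext z
    by_cases hz : z ≤ x / a
    · have h1 : a * z ≤ x := by rwa [← le_div_iff₀' ha]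
      simp [Set.indicator, hz, h1, mul_div_cancel_left₀ _ ha.ne']
    · have h1 : ¬ a * z ≤ x := fun hle => hz (by rwa [← le_div_iff₀' ha] at hle)
      simp [Set.indicator, hz, h1]
  rw [h2] at h
  rw [h, smul_eq_mul, abs_of_pos (inv_pos.2 ha)]
  field_simp

lemma arg_eq {σ t : ℝ} (hσ : 0 < σ) (ht : 0 < t) (y : ℝ) :
    -(y / (σ * Real.sqrt t)) ^ 2 / 2 = -y ^ 2 / (2 * σ ^ 2 * t) := by
  have hsq : Real.sqrt t ^ 2 = t := Real.sq_sqrt ht.le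
  rw [div_pow, mul_pow, hsq]
  ring

lemma Ieq {σ t : ℝ} (hσ : 0 < σ) (ht : 0 < t) (x : ℝ) :
    ∫ y in Set.Iic x, Real.exp (-y ^ 2 / (2 * σ ^ 2 * t))
      = σ * Real.sqrt t * Fc (x / (σ * Real.sqrt t)) := by
  have ha : 0 < σ * Real.sqrt t := by positivity
  have h := scale_Iic (fun z => Real.exp (-z ^ 2 / 2)) ha x
  calc ∫ y in Set.Iic x, Real.exp (-y ^ 2 / (2 * σ ^ 2 * t))
      = ∫ y in Set.Iic x, (fun z => Real.exp (-z ^ 2 / 2)) (y / (σ * Real.sqrt t)) := by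
        refine setIntegral_congr_fun measurableSet_Iic fun y _ => ?_
        simp only
        rw [arg_eq hσ ht y]
    _ = (σ * Real.sqrt t) * ∫ z in Set.Iic (x / (σ * Real.sqrt t)), Real.exp (-z ^ 2 / 2) := h
    _ = σ * Real.sqrt t * Fc (x / (σ * Real.sqrt t)) := rfl

lemma hasDerivAt_Fcomp {σ t : ℝ} (hσ : 0 < σ) (ht : 0 < t) (x : ℝ) :
    HasDerivAt (fun s => Fc (x / (σ * Real.sqrt s)))
      (Real.exp (-x ^ 2 / (2 * σ ^ 2 * t)) * (-x / (2 * σ * t * Real.sqrt t))) t := by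
  have hst : (0:ℝ) < Real.sqrt t := Real.sqrt_pos.2 ht
  have h1 : HasDerivAt (fun s : ℝ => σ * Real.sqrt s) (σ * (1 / (2 * Real.sqrt t))) t :=
    (Real.hasDerivAt_sqrt ht.ne').const_mul σ
  have h2 : HasDerivAt (fun s => x / (σ * Real.sqrt s))
      ((0 * (σ * Real.sqrt t) - x * (σ * (1 / (2 * Real.sqrt t)))) / (σ * Real.sqrt t) ^ 2) t :=
    (hasDerivAt_const t x).div h1 (by positivity)
  have h3 := (hFc (x / (σ * Real.sqrt t))).comp t h2
  refine h3.congr_deriv ?_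
  rw [arg_eq hσ ht x]
  have hsq : Real.sqrt t * Real.sqrt t = t := Real.mul_self_sqrt ht.le
  rw [mul_pow, Real.sq_sqrt ht.le]
  field_simp
  ring

theorem stmt_7 (σl σu : ℝ) (hl : 0 < σl) (hle : σl ≤ σu)
    (ρ : ℝ → ℝ → ℝ)
    (hρ : ∀ t x, ρ t x = (Real.sqrt 2 / ((σu + σl) * Real.sqrt (Real.pi * t))) *
      (if x ≤ 0 then Real.exp (-x ^ 2 / (2 * σu ^ 2 * t))
       else Real.exp (-x ^ 2 / (2 * σl ^ 2 * t))))
    (u : ℝ → ℝ → ℝ)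
    (hu : ∀ t x, u t x = ∫ y in Set.Iic x, ρ t y)
    (G : ℝ → ℝ)
    (hG : ∀ a, G a = (σu ^ 2 * max a 0 - σl ^ 2 * max (-a) 0) / 2) :
    ∀ t > 0, ∀ x : ℝ, x ≠ 0 →
      deriv (fun s => u s x) t = G (deriv (fun y => deriv (fun z => u t z) y) x) := by
  intro t ht x hx
  have hσu : 0 < σu := lt_of_lt_of_le hl hle
  have hsum : 0 < σu + σl := by linarith
  have hπ : 0 < Real.pi := Real.pi_pos
  have hsπ : (0:ℝ) < Real.sqrt Real.pi := Real.sqrt_pos.2 hπ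
  -- integrability of ρ s for s > 0
  have hρ_int : ∀ s : ℝ, 0 < s → Integrable (ρ s) := by
    intro s hs
    have h1 : Integrable (fun y : ℝ => Real.exp (-y ^ 2 / (2 * σu ^ 2 * s))) :=
      int_exp_aux (by positivity)
    have h2 : Integrable (fun y : ℝ => Real.exp (-y ^ 2 / (2 * σl ^ 2 * s))) :=
      int_exp_aux (by positivity)
    have hCst : 0 ≤ Real.sqrt 2 / ((σu + σl) * Real.sqrt (Real.pi * s)) :=
      div_nonneg (Real.sqrt_nonneg 2) (mul_nonneg hsum.le (Real.sqrt_nonneg _))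
    have hmeas : Measurable (ρ s) := by
      rw [show ρ s = fun y => (Real.sqrt 2 / ((σu + σl) * Real.sqrt (Real.pi * s))) *
        (if y ≤ 0 then Real.exp (-y ^ 2 / (2 * σu ^ 2 * s))
         else Real.exp (-y ^ 2 / (2 * σl ^ 2 * s))) from funext (hρ s)]
      exact measurable_const.mul (Measurable.ite measurableSet_Iic
        (by fun_prop) (by fun_prop))
    refine Integrable.mono' ((h1.add h2).const_mul
      (Real.sqrt 2 / ((σu + σl) * Real.sqrt (Real.pi * s))))
      hmeas.aestronglyMeasurable (Filter.Eventually.of_forall fun y => ?_)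
    rw [hρ s y, Real.norm_eq_abs, abs_mul, abs_of_nonneg hCst,
      abs_of_nonneg (by split_ifs <;> positivity)]
    apply mul_le_mul_of_nonneg_left _ hCst
    split_ifs
    · exact le_add_of_nonneg_right (Real.exp_pos _).le
    · exact le_add_of_nonneg_left (Real.exp_pos _).le
  -- first space derivative
  have hspace : ∀ y : ℝ, y ≠ 0 → deriv (fun z => u t z) y = ρ t y := by
    intro y hy
    have hint := hρ_int t ht
    have hcont : ContinuousAt (ρ t) y := by
      rcases lt_or_gt_of_ne hy with h | h
      · have hev : (fun z : ℝ => (Real.sqrt 2 / ((σu + σl) * Real.sqrt (Real.pi * t))) *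
            Real.exp (-z ^ 2 / (2 * σu ^ 2 * t))) =ᶠ[nhds y] ρ t := by
          filter_upwards [Iio_mem_nhds h] with z hz
          rw [hρ, if_pos (le_of_lt hz)]
        exact ContinuousAt.congr (by fun_prop) hev
      · have hev : (fun z : ℝ => (Real.sqrt 2 / ((σu + σl) * Real.sqrt (Real.pi * t))) *
            Real.exp (-z ^ 2 / (2 * σl ^ 2 * t))) =ᶠ[nhds y] ρ t := by
          filter_upwards [Ioi_mem_nhds h] with z hz
          rw [hρ, if_neg (not_le.2 hz)]
        exact ContinuousAt.congr (by fun_prop) hev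
    have key : ∀ z, u t z = u t y + ∫ w in y..z, ρ t w := by
      intro z
      have h := intervalIntegral.integral_Iic_sub_Iic (μ := volume) (f := ρ t)
        (a := y) (b := z) hint.integrableOn hint.integrableOn
      rw [hu t z, hu t y]
      linarith
    rw [show (fun z => u t z) = fun z => u t y + ∫ w in y..z, ρ t w from funext key]
    exact ((intervalIntegral.integral_hasDerivAt_right hint.intervalIntegrable
      hint.aestronglyMeasurable.stronglyMeasurableAtFilter hcont).const_add _).deriv
  have hev : (fun y => deriv (fun z => u t z) y) =ᶠ[nhds x] ρ t := by
    filter_upwards [compl_singleton_mem_nhds hx] with y hy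
    exact hspace y hy
  rw [hev.deriv_eq]
  have hst : (0:ℝ) < Real.sqrt t := Real.sqrt_pos.2 ht
  have hrt : Real.sqrt t * Real.sqrt t = t := Real.mul_self_sqrt ht.le
  rcases lt_or_gt_of_ne hx with hneg | hpos
  · -- case x < 0
    -- second space derivative
    have hevρ : ρ t =ᶠ[nhds x] fun y : ℝ =>
        (Real.sqrt 2 / ((σu + σl) * Real.sqrt (Real.pi * t))) *
          Real.exp (-y ^ 2 / (2 * σu ^ 2 * t)) := by
      filter_upwards [Iio_mem_nhds hneg] with z hz
      rw [hρ, if_pos (le_of_lt hz)]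
    rw [hevρ.deriv_eq]
    have hinner : HasDerivAt (fun y : ℝ => -y ^ 2 / (2 * σu ^ 2 * t))
        (-(2 * x) / (2 * σu ^ 2 * t)) x := by
      have hp : HasDerivAt (fun y : ℝ => -y ^ 2) (-(2 * x)) x := by
        exact (hasDerivAt_pow 2 x).neg.congr_deriv (by norm_num)
      exact hp.div_const _
    have hbr : HasDerivAt (fun y : ℝ =>
        (Real.sqrt 2 / ((σu + σl) * Real.sqrt (Real.pi * t))) *
          Real.exp (-y ^ 2 / (2 * σu ^ 2 * t)))
        ((Real.sqrt 2 / ((σu + σl) * Real.sqrt (Real.pi * t))) *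
          (Real.exp (-x ^ 2 / (2 * σu ^ 2 * t)) * (-(2 * x) / (2 * σu ^ 2 * t)))) x :=
      ((Real.hasDerivAt_exp _).comp x hinner).const_mul _
    rw [hbr.deriv]
    -- time derivative
    have huev : (fun s => u s x) =ᶠ[nhds t] fun s =>
        (Real.sqrt 2 * σu / ((σu + σl) * Real.sqrt Real.pi)) *
          Fc (x / (σu * Real.sqrt s)) := by
      filter_upwards [Ioi_mem_nhds ht] with s hs
      have hs' : (0:ℝ) < s := hs
      rw [hu]
      rw [setIntegral_congr_fun measurableSet_Iic
        (g := fun y : ℝ => (Real.sqrt 2 / ((σu + σl) * Real.sqrt (Real.pi * s))) *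
          Real.exp (-y ^ 2 / (2 * σu ^ 2 * s)))
        (fun y hy => by rw [hρ, if_pos (le_trans hy hneg.le)])]
      rw [MeasureTheory.integral_const_mul, Ieq hσu hs', Real.sqrt_mul hπ.le]
      have hss : Real.sqrt s ≠ 0 := (Real.sqrt_pos.2 hs').ne'
      field_simp
    rw [huev.deriv_eq,
      ((hasDerivAt_Fcomp hσu ht x).const_mul
        (Real.sqrt 2 * σu / ((σu + σl) * Real.sqrt Real.pi))).deriv]
    -- final algebra
    rw [hG]
    have hE : (0:ℝ) < Real.exp (-x ^ 2 / (2 * σu ^ 2 * t)) := Real.exp_pos _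
    have hCv : 0 ≤ Real.sqrt 2 / ((σu + σl) * Real.sqrt (Real.pi * t)) :=
      div_nonneg (Real.sqrt_nonneg 2) (mul_nonneg hsum.le (Real.sqrt_nonneg _))
    have ha : 0 ≤ (Real.sqrt 2 / ((σu + σl) * Real.sqrt (Real.pi * t))) *
        (Real.exp (-x ^ 2 / (2 * σu ^ 2 * t)) * (-(2 * x) / (2 * σu ^ 2 * t))) :=
      mul_nonneg hCv (mul_nonneg hE.le (div_nonneg (by linarith) (by positivity)))
    rw [max_eq_left ha, max_eq_right (neg_nonpos.2 ha)]
    rw [Real.sqrt_mul hπ.le, ← hrt]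
    field_simp
    ring
  · -- case x > 0
    have hevρ : ρ t =ᶠ[nhds x] fun y : ℝ =>
        (Real.sqrt 2 / ((σu + σl) * Real.sqrt (Real.pi * t))) *
          Real.exp (-y ^ 2 / (2 * σl ^ 2 * t)) := by
      filter_upwards [Ioi_mem_nhds hpos] with z hz
      rw [hρ, if_neg (not_le.2 hz)]
    rw [hevρ.deriv_eq]
    have hinner : HasDerivAt (fun y : ℝ => -y ^ 2 / (2 * σl ^ 2 * t))
        (-(2 * x) / (2 * σl ^ 2 * t)) x := by
      have hp : HasDerivAt (fun y : ℝ => -y ^ 2) (-(2 * x)) x := by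
        exact (hasDerivAt_pow 2 x).neg.congr_deriv (by norm_num)
      exact hp.div_const _
    have hbr : HasDerivAt (fun y : ℝ =>
        (Real.sqrt 2 / ((σu + σl) * Real.sqrt (Real.pi * t))) *
          Real.exp (-y ^ 2 / (2 * σl ^ 2 * t)))
        ((Real.sqrt 2 / ((σu + σl) * Real.sqrt (Real.pi * t))) *
          (Real.exp (-x ^ 2 / (2 * σl ^ 2 * t)) * (-(2 * x) / (2 * σl ^ 2 * t)))) x :=
      ((Real.hasDerivAt_exp _).comp x hinner).const_mul _
    rw [hbr.deriv]
    -- time derivative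
    have huev : (fun s => u s x) =ᶠ[nhds t] fun s =>
        ((Real.sqrt 2 * σu / ((σu + σl) * Real.sqrt Real.pi)) * Fc 0
          - (Real.sqrt 2 * σl / ((σu + σl) * Real.sqrt Real.pi)) * Fc 0) +
        (Real.sqrt 2 * σl / ((σu + σl) * Real.sqrt Real.pi)) *
          Fc (x / (σl * Real.sqrt s)) := by
      filter_upwards [Ioi_mem_nhds ht] with s hs
      have hs' : (0:ℝ) < s := hs
      have hss : Real.sqrt s ≠ 0 := (Real.sqrt_pos.2 hs').ne'
      have hint2 : Integrable (fun y : ℝ => Real.exp (-y ^ 2 / (2 * σl ^ 2 * s))) :=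
        int_exp_aux (by positivity)
      rw [hu]
      rw [show Set.Iic x = Set.Iic 0 ∪ Set.Ioc 0 x from (Set.Iic_union_Ioc_eq_Iic hpos.le).symm]
      rw [setIntegral_union (Set.Iic_disjoint_Ioc le_rfl) measurableSet_Ioc
        ((hρ_int s hs').integrableOn) ((hρ_int s hs').integrableOn)]
      have hp1 : ∫ y in Set.Iic (0:ℝ), ρ s y
          = (Real.sqrt 2 * σu / ((σu + σl) * Real.sqrt Real.pi)) * Fc 0 := by
        rw [setIntegral_congr_fun measurableSet_Iic
          (g := fun y : ℝ => (Real.sqrt 2 / ((σu + σl) * Real.sqrt (Real.pi * s))) *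
            Real.exp (-y ^ 2 / (2 * σu ^ 2 * s)))
          (fun y hy => by rw [hρ, if_pos (Set.mem_Iic.mp hy)])]
        rw [MeasureTheory.integral_const_mul, Ieq hσu hs', zero_div, Real.sqrt_mul hπ.le]
        field_simp
      have hp2 : ∫ y in Set.Ioc (0:ℝ) x, ρ s y
          = (Real.sqrt 2 * σl / ((σu + σl) * Real.sqrt Real.pi)) *
              Fc (x / (σl * Real.sqrt s))
            - (Real.sqrt 2 * σl / ((σu + σl) * Real.sqrt Real.pi)) * Fc 0 := by
        rw [setIntegral_congr_fun measurableSet_Ioc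
          (g := fun y : ℝ => (Real.sqrt 2 / ((σu + σl) * Real.sqrt (Real.pi * s))) *
            Real.exp (-y ^ 2 / (2 * σl ^ 2 * s)))
          (fun y hy => by rw [hρ, if_neg (not_le.2 hy.1)])]
        rw [MeasureTheory.integral_const_mul]
        have hIoc : ∫ y in Set.Ioc (0:ℝ) x, Real.exp (-y ^ 2 / (2 * σl ^ 2 * s))
            = (∫ y in Set.Iic x, Real.exp (-y ^ 2 / (2 * σl ^ 2 * s)))
              - ∫ y in Set.Iic (0:ℝ), Real.exp (-y ^ 2 / (2 * σl ^ 2 * s)) := by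
          have h : ∫ y in Set.Iic (0:ℝ) ∪ Set.Ioc (0:ℝ) x,
                Real.exp (-y ^ 2 / (2 * σl ^ 2 * s))
              = (∫ y in Set.Iic (0:ℝ), Real.exp (-y ^ 2 / (2 * σl ^ 2 * s)))
                + ∫ y in Set.Ioc (0:ℝ) x, Real.exp (-y ^ 2 / (2 * σl ^ 2 * s)) :=
            setIntegral_union (Set.Iic_disjoint_Ioc (le_refl (0:ℝ)))
              measurableSet_Ioc hint2.integrableOn hint2.integrableOn
          rw [Set.Iic_union_Ioc_eq_Iic hpos.le] at h
          linarith
        rw [hIoc, Ieq hl hs', Ieq hl hs', zero_div, Real.sqrt_mul hπ.le]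
        field_simp
      rw [hp1, hp2]
      ring
    rw [huev.deriv_eq,
      (((hasDerivAt_Fcomp hl ht x).const_mul
        (Real.sqrt 2 * σl / ((σu + σl) * Real.sqrt Real.pi))).const_add _).deriv]
    -- final algebra
    rw [hG]
    have hE : (0:ℝ) < Real.exp (-x ^ 2 / (2 * σl ^ 2 * t)) := Real.exp_pos _
    have hCv : 0 ≤ Real.sqrt 2 / ((σu + σl) * Real.sqrt (Real.pi * t)) :=
      div_nonneg (Real.sqrt_nonneg 2) (mul_nonneg hsum.le (Real.sqrt_nonneg _))
    have ha' : 0 ≤ -((Real.sqrt 2 / ((σu + σl) * Real.sqrt (Real.pi * t))) *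
        (Real.exp (-x ^ 2 / (2 * σl ^ 2 * t)) * (-(2 * x) / (2 * σl ^ 2 * t)))) := by
      rw [show -((Real.sqrt 2 / ((σu + σl) * Real.sqrt (Real.pi * t))) *
          (Real.exp (-x ^ 2 / (2 * σl ^ 2 * t)) * (-(2 * x) / (2 * σl ^ 2 * t))))
        = (Real.sqrt 2 / ((σu + σl) * Real.sqrt (Real.pi * t))) *
          (Real.exp (-x ^ 2 / (2 * σl ^ 2 * t)) * ((2 * x) / (2 * σl ^ 2 * t))) by ring]
      exact mul_nonneg hCv (mul_nonneg hE.le (div_nonneg (by linarith) (by positivity)))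
    have ha : (Real.sqrt 2 / ((σu + σl) * Real.sqrt (Real.pi * t))) *
        (Real.exp (-x ^ 2 / (2 * σl ^ 2 * t)) * (-(2 * x) / (2 * σl ^ 2 * t))) ≤ 0 := by
      linarith
    rw [max_eq_right ha, max_eq_left ha']
    rw [Real.sqrt_mul hπ.le, ← hrt]
    field_simp
    ring
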